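/- Let k ≥ 2, μ > 0, p > 1 with μ/k > 2/(p-1), i.e. p > 1 + 2k/μ. For c ∈ ℝ define, for r > 0 small enough that c·r^{μ(p-1)/k} + r²/(μ - 2k/(p-1)) > 0, u(r) = (c·r^{μ(p-1)/k} + r²/(μ - 2k/(p-1)))^{-1/(p-1)}. Then u is positive, satisfies k·u'(r)/r + μ·u(r)/r² = u(r)^p, and u(r)·r^{2/(p-1)} → (μ - 2k/(p-1))^{1/(p-1)} as r → 0⁺. -/

import Mathlib

open Set Filter

theorem stmt13 (k : ℕ) (hk : 2 ≤ k)
    (μ p : ℝ) (hμ : 0 < μ) (hp : 1 < p) (hsup : 2 / (p - 1) < μ / (k:ℝ))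
    (c : ℝ)
    (d u : ℝ → ℝ)
    (hd : ∀ r : ℝ, d r = c * r ^ (μ * (p - 1) / (k:ℝ)) + r ^ (2:ℝ) / (μ - 2 * (k:ℝ) / (p - 1)))
    (hu : ∀ r : ℝ, u r = d r ^ (-(1 / (p - 1)))) :
    (∃ r₁ ∈ Ioo (0:ℝ) 1, ∀ r ∈ Ioo (0:ℝ) r₁,
      0 < d r ∧ 0 < u r ∧
      (k:ℝ) * deriv u r / r + μ * u r / r ^ 2 = u r ^ p) ∧
    Tendsto (fun r : ℝ => u r * r ^ (2 / (p - 1))) (nhdsWithin 0 (Ioi 0))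
      (nhds ((μ - 2 * (k:ℝ) / (p - 1)) ^ (1 / (p - 1)))) := by
  have hp1 : (0:ℝ) < p - 1 := by linarith
  have hk0 : (0:ℝ) < (k:ℝ) := by exact_mod_cast Nat.lt_of_lt_of_le Nat.zero_lt_two hk
  have h2k : 2 * (k:ℝ) < μ * (p - 1) := by
    rw [div_lt_div_iff₀ hp1 hk0] at hsup; linarith
  set α := μ * (p - 1) / (k:ℝ) with hαdef
  set A := μ - 2 * (k:ℝ) / (p - 1) with hAdef
  set q := -(1 / (p - 1)) with hqdef
  have hA : 0 < A := by
    have : 2 * (k:ℝ) / (p - 1) < μ := (div_lt_iff₀ hp1).mpr (by linarith)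
    rw [hAdef]; linarith
  have hADne : μ - 2 * (k:ℝ) / (p - 1) ≠ 0 := by rw [← hAdef]; exact hA.ne'
  have hα2 : 2 < α := by
    rw [hαdef, lt_div_iff₀ hk0]; linarith
  have hdf : d = fun r => c * r ^ α + r ^ (2:ℝ) / A := funext hd
  subst hdf
  have huf : u = fun r => (c * r ^ α + r ^ (2:ℝ) / A) ^ q := funext hu
  subst huf
  set g : ℝ → ℝ := fun r => c * r ^ (α - 2) + 1 / A with hgdef
  have hdg : ∀ r : ℝ, 0 < r → c * r ^ α + r ^ (2:ℝ) / A = r ^ (2:ℝ) * g r := by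
    intro r hr
    have h1 : r ^ α = r ^ (2:ℝ) * r ^ (α - 2) := by
      rw [← Real.rpow_add hr]; congr 1; ring
    simp only [hgdef]
    rw [h1]; ring
  have hrpow0 : Tendsto (fun r : ℝ => r ^ (α - 2)) (nhdsWithin 0 (Ioi 0)) (nhds 0) := by
    have hc : ContinuousAt (fun x : ℝ => x ^ (α - 2)) 0 :=
      Real.continuousAt_rpow_const 0 _ (Or.inr (by linarith))
    have := (hc.continuousWithinAt (s := Ioi 0)).tendsto
    simpa [Real.zero_rpow (by linarith : α - 2 ≠ 0)] using this
  have hg : Tendsto g (nhdsWithin 0 (Ioi 0)) (nhds (1 / A)) := by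
    have := (hrpow0.const_mul c).add_const (1 / A)
    simpa [hgdef] using this
  have hgpos : ∀ᶠ r in nhdsWithin 0 (Ioi 0), 0 < g r :=
    hg.eventually (eventually_gt_nhds (by positivity))
  constructor
  · obtain ⟨u₀, hu₀, hsub⟩ := mem_nhdsGT_iff_exists_Ioo_subset.mp hgpos
    have hu₀' : (0:ℝ) < u₀ := hu₀
    refine ⟨min u₀ 1 / 2, ⟨by positivity, by
      have : min u₀ 1 ≤ 1 := min_le_right _ _
      linarith⟩, ?_⟩
    rintro r ⟨hr, hrlt⟩
    have hru : r < u₀ := lt_of_lt_of_le hrlt (by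
      have := min_le_left u₀ 1; linarith)
    have hgr : 0 < g r := hsub ⟨hr, hru⟩
    have hr2 : (0:ℝ) < r ^ (2:ℝ) := Real.rpow_pos_of_pos hr _
    have hdr : 0 < c * r ^ α + r ^ (2:ℝ) / A := by
      rw [hdg r hr]; positivity
    refine ⟨hdr, Real.rpow_pos_of_pos hdr _, ?_⟩
    have h1 : HasDerivAt (fun x : ℝ => x ^ α) (α * r ^ (α - 1)) r :=
      Real.hasDerivAt_rpow_const (Or.inl hr.ne')
    have h2 : HasDerivAt (fun x : ℝ => x ^ (2:ℝ)) (2 * r ^ ((2:ℝ) - 1)) r :=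
      Real.hasDerivAt_rpow_const (Or.inl hr.ne')
    have hdD : HasDerivAt (fun x : ℝ => c * x ^ α + x ^ (2:ℝ) / A)
        (c * (α * r ^ (α - 1)) + 2 * r ^ ((2:ℝ) - 1) / A) r :=
      (h1.const_mul c).add (h2.div_const A)
    have huD : HasDerivAt (fun x : ℝ => (c * x ^ α + x ^ (2:ℝ) / A) ^ q)
        ((c * (α * r ^ (α - 1)) + 2 * r ^ ((2:ℝ) - 1) / A) * q *
          (c * r ^ α + r ^ (2:ℝ) / A) ^ (q - 1)) r :=
      hdD.rpow_const (Or.inl hdr.ne')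
    simp only []
    rw [huD.deriv]
    set t := r ^ (α - 2) with htdef
    have e2 : r ^ (α - 1) = t * r := by
      rw [htdef, show α - 1 = (α - 2) + 1 by ring, Real.rpow_add hr, Real.rpow_one]
    have e3 : r ^ ((2:ℝ) - 1) = r := by norm_num
    have e1 : r ^ α = t * r * r := by
      rw [htdef, show α = (α - 2) + 1 + 1 by ring, Real.rpow_add hr, Real.rpow_add hr,
        Real.rpow_one]
      ring
    have e4 : r ^ (2:ℝ) = r * r := by
      rw [show (2:ℝ) = (1:ℝ) + 1 by norm_num, Real.rpow_add hr, Real.rpow_one]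
    rw [e1, e2, e3, e4]
    set D := c * (t * r * r) + r * r / A with hDdef
    have hDpos : 0 < D := by rw [hDdef, ← e1, ← e4]; exact hdr
    have hqp : q * p = q - 1 := by rw [hqdef]; field_simp; ring
    have hRHS : (D ^ q) ^ p = D ^ (q - 1) := by
      rw [← Real.rpow_mul hDpos.le, hqp]
    have hDq : D ^ q = D ^ (q - 1) * D := by
      have h := (Real.rpow_add hDpos (q - 1) 1).symm
      rw [Real.rpow_one] at h
      rw [h]; ring_nf
    rw [hRHS, hDq]
    have key : (k:ℝ) * ((c * (α * (t * r)) + 2 * r / A) * q) / r + μ * D / r ^ 2 = 1 := by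
      have hne3 : (-((k:ℝ) * 2) + (p * μ - μ) : ℝ) ≠ 0 := by
        have : μ * (p - 1) = p * μ - μ := by ring
        nlinarith [h2k]
      rw [hDdef, hαdef, hqdef, hAdef]
      field_simp [hne3]
      have hE : μ * (p - 1) - (k:ℝ) * 2 ≠ 0 := (by linarith : (0:ℝ) < μ * (p - 1) - (k:ℝ) * 2).ne'
      linear_combination mul_inv_cancel₀ hE
    calc (k:ℝ) * ((c * (α * (t * r)) + 2 * r / A) * q * D ^ (q - 1)) / r
          + μ * (D ^ (q - 1) * D) / r ^ 2
        = D ^ (q - 1) * ((k:ℝ) * ((c * (α * (t * r)) + 2 * r / A) * q) / r + μ * D / r ^ 2) := by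
          ring
      _ = D ^ (q - 1) := by rw [key, mul_one]
  · have hmem : ∀ᶠ r in nhdsWithin 0 (Ioi 0),
        g r ^ q = (fun r : ℝ => (c * r ^ α + r ^ (2:ℝ) / A) ^ q * r ^ (2 / (p - 1))) r := by
      filter_upwards [hgpos, self_mem_nhdsWithin] with r hgr hr
      have hr : (0:ℝ) < r := hr
      have hbr : (0:ℝ) ≤ r ^ (2:ℝ) := (Real.rpow_pos_of_pos hr _).le
      rw [hdg r hr, Real.mul_rpow hbr hgr.le, ← Real.rpow_mul hr.le]
      have hone : r ^ ((2:ℝ) * q) * r ^ (2 / (p - 1)) = 1 := by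
        rw [← Real.rpow_add hr, show (2:ℝ) * q + 2 / (p - 1) = 0 by rw [hqdef]; field_simp; ring,
          Real.rpow_zero]
      rw [show r ^ ((2:ℝ) * q) * g r ^ q * r ^ (2 / (p - 1))
          = r ^ ((2:ℝ) * q) * r ^ (2 / (p - 1)) * g r ^ q from by ring, hone, one_mul]
    have hlim : Tendsto (fun r => g r ^ q) (nhdsWithin 0 (Ioi 0)) (nhds ((1 / A) ^ q)) :=
      ((Real.continuousAt_rpow_const (1 / A) q (Or.inl (by positivity))).tendsto).comp hg
    have hval : (1 / A) ^ q = A ^ (1 / (p - 1)) := by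
      rw [one_div, Real.inv_rpow hA.le, ← Real.rpow_neg hA.le, hqdef, neg_neg]
    rw [← hval]
    exact hlim.congr' hmem
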